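/- Let s = σ + it ∈ ℂ with 0 < σ < 1 and |t| ≥ 1, and let ε > 0 be real. Then Π_ε(s)/(1+2ε) < Π_0(s) < (1 + ε²/(1+ε))·Π_ε(s). -/

import Mathlib

/-- The pairing function `Π_ε(s) = 1/(s+ε) + 1/(s̄+ε) + 1/(1−s+ε) + 1/(1−s̄+ε)`;
for real `ε` it is real, so we record its real part. -/
noncomputable def pairingFn (ε : ℝ) (s : ℂ) : ℝ :=
  ((s + ε)⁻¹ + ((starRingEnd ℂ) s + ε)⁻¹ + (1 - s + ε)⁻¹ +
    (1 - (starRingEnd ℂ) s + ε)⁻¹).re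

lemma pairingFn_eq (ε : ℝ) (s : ℂ) (him : s.im ≠ 0) :
    pairingFn ε s = 2 * (1 + 2 * ε) * ((s.re + ε) * (1 - s.re + ε) + s.im ^ 2) /
      (((s.re + ε) * (1 - s.re + ε) + s.im ^ 2) ^ 2 + s.im ^ 2 * (2 * s.re - 1) ^ 2) := by
  set σ := s.re
  set t := s.im
  have ht2 : 0 < t ^ 2 := by positivity
  have h1 : 0 < (σ + ε) * (σ + ε) + t * t := by nlinarith
  have h2 : 0 < (1 - σ + ε) * (1 - σ + ε) + t * t := by nlinarith
  have hd : 0 < ((σ + ε) * (1 - σ + ε) + t ^ 2) ^ 2 + t ^ 2 * (2 * σ - 1) ^ 2 := by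
    nlinarith [sq_nonneg ((σ + ε) * (1 - σ + ε) + t ^ 2), sq_nonneg (t * (2 * σ - 1)),
      sq_nonneg ((σ + ε) * (1 - σ + ε) + t ^ 2 - 1)]
  simp only [pairingFn, Complex.add_re, Complex.inv_re, Complex.sub_re, Complex.one_re,
    Complex.ofReal_re, Complex.conj_re, Complex.normSq_apply, Complex.add_im, Complex.sub_im,
    Complex.one_im, Complex.ofReal_im, Complex.conj_im, add_zero, sub_zero, zero_sub, neg_neg,
    mul_neg, neg_mul]
  rw [show s.re = σ from rfl, show s.im = t from rfl]
  rw [eq_div_iff hd.ne']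
  field_simp
  ring

lemma key_ineq (A B V ε : ℝ) (hε : 0 < ε) (hA : 1 ≤ A) (hB : B = A + (ε + ε ^ 2))
    (hV0 : 0 ≤ V) (hVA : V < A) :
    2 * (1 + 2 * ε) * B / (B ^ 2 + V) / (1 + 2 * ε) < 2 * A / (A ^ 2 + V) ∧
      2 * A / (A ^ 2 + V) < (1 + ε ^ 2 / (1 + ε)) * (2 * (1 + 2 * ε) * B / (B ^ 2 + V)) := by
  subst hB
  set B := A + (ε + ε ^ 2) with hB
  have hBge : 1 ≤ B := by nlinarith
  have hd1 : 0 < A ^ 2 + V := by nlinarith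
  have hd2 : 0 < B ^ 2 + V := by nlinarith
  have h2e : 0 < 1 + 2 * ε := by linarith
  have h1e : 0 < 1 + ε := by linarith
  have hδ : 0 < B - A := by nlinarith
  have hABV : 0 < A * B - V := by nlinarith
  constructor
  · rw [div_div, div_lt_div_iff₀ (mul_pos hd2 h2e) hd1]
    nlinarith [mul_pos (mul_pos h2e hδ) hABV]
  · have step1 : A * (B ^ 2 + V) ≤ (1 + ε + ε ^ 2) * B * (A ^ 2 + V) := by
      have hδ' : (0:ℝ) ≤ ε + ε ^ 2 := by positivity
      have hA0 : (0:ℝ) ≤ A := by linarith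
      have hA1 : (0:ℝ) ≤ A - 1 := by linarith
      rw [hB]
      nlinarith [mul_nonneg (mul_nonneg hδ' hA1) (mul_nonneg hA0 hA0),
        mul_nonneg (mul_nonneg (mul_nonneg hδ' hδ') hA1) hA0,
        mul_nonneg (mul_nonneg hδ' hA0) hV0, mul_nonneg hδ' hV0,
        mul_nonneg (mul_nonneg hδ' hδ') hV0]
    have heq : (1 + ε ^ 2 / (1 + ε)) * (2 * (1 + 2 * ε) * B / (B ^ 2 + V)) =
        (1 + ε + ε ^ 2) * ((1 + 2 * ε) * (2 * B)) / ((1 + ε) * (B ^ 2 + V)) := by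
      rw [hB]
      field_simp
    rw [heq, div_lt_div_iff₀ hd1 (mul_pos h1e hd2)]
    nlinarith [step1, mul_pos (mul_pos hε (by linarith : (0:ℝ) < B)) hd1, h1e,
      mul_pos (mul_pos (mul_pos hε (by positivity : (0:ℝ) < 1 + ε + ε ^ 2))
        (by linarith : (0:ℝ) < B)) hd1]

theorem pairing_ineq_R1 (s : ℂ) (hσ0 : 0 < s.re) (hσ1 : s.re < 1)
    (ht : 1 ≤ |s.im|) (ε : ℝ) (hε : 0 < ε) :
    pairingFn ε s / (1 + 2 * ε) < pairingFn 0 s ∧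
      pairingFn 0 s < (1 + ε ^ 2 / (1 + ε)) * pairingFn ε s := by
  have him : s.im ≠ 0 := by
    intro h
    rw [h] at ht
    simp at ht
    linarith
  have hT : (1:ℝ) ≤ s.im ^ 2 := by
    have h := sq_abs s.im
    nlinarith
  have hA : (1:ℝ) ≤ s.re * (1 - s.re) + s.im ^ 2 := by nlinarith
  have hB : (s.re + ε) * (1 - s.re + ε) + s.im ^ 2 =
      (s.re * (1 - s.re) + s.im ^ 2) + (ε + ε ^ 2) := by ring
  have hV0 : (0:ℝ) ≤ s.im ^ 2 * (2 * s.re - 1) ^ 2 := by positivity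
  have hVA : s.im ^ 2 * (2 * s.re - 1) ^ 2 < s.re * (1 - s.re) + s.im ^ 2 := by
    nlinarith [mul_pos (mul_pos hσ0 (by linarith : (0:ℝ) < 1 - s.re))
      (by nlinarith : (0:ℝ) < s.im ^ 2)]
  obtain ⟨k1, k2⟩ := key_ineq (s.re * (1 - s.re) + s.im ^ 2)
    ((s.re + ε) * (1 - s.re + ε) + s.im ^ 2) (s.im ^ 2 * (2 * s.re - 1) ^ 2) ε hε hA hB hV0 hVA
  have e1 : pairingFn ε s = 2 * (1 + 2 * ε) * ((s.re + ε) * (1 - s.re + ε) + s.im ^ 2) /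
      (((s.re + ε) * (1 - s.re + ε) + s.im ^ 2) ^ 2 + s.im ^ 2 * (2 * s.re - 1) ^ 2) :=
    pairingFn_eq ε s him
  have e0 : pairingFn 0 s = 2 * (s.re * (1 - s.re) + s.im ^ 2) /
      ((s.re * (1 - s.re) + s.im ^ 2) ^ 2 + s.im ^ 2 * (2 * s.re - 1) ^ 2) := by
    rw [pairingFn_eq 0 s him]
    norm_num
  rw [e0, e1]
  exact ⟨k1, k2⟩
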